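/- There exists a positive Borel measure μ on ℝ of the form μ = ∑_{j=1}^n ω_j δ_{x_j} with ω_j > 0 for every j (δ_x denoting the unit point mass at x) such that ∫ P_m(x) x^k dμ(x) = 0 for every k = 0,…,m−1, if and only if {y_k}_{k=1}^m strictly interlaces {x_j}_{j=1}^n. -/
import Mathlib


open MeasureTheory

/-- `Pm m y` is the monic polynomial `P_m(t) = ∏_{k=1}^m (t - y_k)` (1-based indexing). -/
noncomputable def Pm (m : ℕ) (y : ℕ → ℝ) (t : ℝ) : ℝ := ∏ k ∈ Finset.Icc 1 m, (t - y k)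

/-- `{y_k}_{k=1}^m` strictly interlaces `{x_j}_{j=1}^n`: there are integers
`0 = i_0 < i_1 < ⋯ < i_m < i_{m+1} = n` with `x_{i_k} < y_k < x_{i_k + 1}` for `k = 1,…,m`
(1-based indexing of the sequences `x`, `y`). -/
def StrictlyInterlacesR (n m : ℕ) (x y : ℕ → ℝ) : Prop :=
  ∃ i : ℕ → ℕ, i 0 = 0 ∧ i (m + 1) = n ∧ (∀ r, r ≤ m → i r < i (r + 1)) ∧
    ∀ k, 1 ≤ k → k ≤ m → x (i k) < y k ∧ y k < x (i k + 1)


section StmtAux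
open Finset Polynomial

lemma aux_prod_ne_zero {ι : Type*} (s : Finset ι) (f : ι → ℝ) (h : ∀ i ∈ s, f i ≠ 0) :
    ∏ i ∈ s, f i ≠ 0 := Finset.prod_ne_zero_iff.2 h

lemma aux_prod_pos_iff {ι : Type*} (s : Finset ι) (f : ι → ℝ) (h : ∀ i ∈ s, f i ≠ 0) :
    (0 < ∏ i ∈ s, f i) ↔ Even (s.filter (fun i => f i < 0)).card := by
  classical
  induction s using Finset.induction_on with
  | empty => simp
  | @insert a s ha ih =>
    have hfa : f a ≠ 0 := h a (mem_insert_self a s)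
    have h' : ∀ i ∈ s, f i ≠ 0 := fun i hi => h i (mem_insert_of_mem hi)
    rw [Finset.prod_insert ha, Finset.filter_insert]
    rcases lt_or_gt_of_ne hfa with hneg | hpos
    · rw [if_pos hneg]
      have hps : ∏ i ∈ s, f i ≠ 0 := aux_prod_ne_zero s f h'
      rw [Finset.card_insert_of_notMem (fun hmem => ha (Finset.mem_of_mem_filter a hmem))]
      constructor
      · intro hlt
        have : ∏ i ∈ s, f i < 0 := by
          rcases hps.lt_or_gt with h1 | h1
          · exact h1
          · nlinarith
        have : ¬ Even ((s.filter (fun i => f i < 0)).card) := by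
          intro he; have := (ih h').2 he; nlinarith
        exact (Nat.even_add_one.mpr this)
      · intro he
        have hodd : ¬ Even ((s.filter (fun i => f i < 0)).card) := by
          intro h2; rw [Nat.even_add_one] at he; exact he h2
        have : ¬ (0 < ∏ i ∈ s, f i) := fun h2 => hodd ((ih h').1 h2)
        have hlt : ∏ i ∈ s, f i < 0 := by rcases hps.lt_or_gt with h1 | h1; exact h1; exact absurd h1 this
        nlinarith
    · rw [if_neg (by linarith)]
      constructor
      · intro hlt
        exact (ih h').1 (by nlinarith)
      · intro he
        have := (ih h').2 he; nlinarith

-- downward closed subsets of Icc 1 n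

lemma aux_downward {n : ℕ} (S : Finset ℕ) (hS : S ⊆ Finset.Icc 1 n)
    (hdc : ∀ j ∈ S, ∀ j', 1 ≤ j' → j' ≤ j → j' ∈ S) : S = Finset.Icc 1 S.card := by
  classical
  rcases S.eq_empty_or_nonempty with rfl | hne
  · simp
  · set M := S.max' hne with hM
    have hsub : S = Finset.Icc 1 M := by
      apply Finset.Subset.antisymm
      · intro j hj
        rw [Finset.mem_Icc]
        exact ⟨(Finset.mem_Icc.1 (hS hj)).1, S.le_max' j hj⟩
      · intro j hj
        rw [Finset.mem_Icc] at hj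
        exact hdc M (S.max'_mem hne) j hj.1 hj.2
    have hcard : S.card = M := by
      rw [hsub, Nat.card_Icc]; omega
    rw [hcard]; exact hsub

lemma aux_dd {m : ℕ} (t : ℕ → ℝ) (ht : ∀ r s, r < s → s ≤ m → t r < t s) {k : ℕ} (hk : k < m) :
    ∑ r ∈ Finset.range (m + 1),
      (∏ s ∈ (Finset.range (m + 1)).erase r, (t r - t s)⁻¹) * t r ^ k = 0 := by
  classical
  have hinj : Set.InjOn t (Finset.range (m + 1) : Set ℕ) := by
    intro a ha b hb hab
    simp only [Finset.coe_range, Set.mem_Iio] at ha hb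
    by_contra hne
    rcases Nat.lt_or_ge a b with h | h
    · exact absurd hab (ne_of_lt (ht a b h (by omega)))
    · have : a ≠ b := hne
      have h' : b < a := by omega
      exact absurd hab.symm (ne_of_lt (ht b a h' (by omega)))
  have hdeg : (X ^ k : ℝ[X]).degree < (Finset.range (m + 1)).card := by
    rw [Polynomial.degree_X_pow, Finset.card_range]
    exact_mod_cast Nat.lt_succ_of_lt hk
  have heq := Lagrange.eq_interpolate (f := (X ^ k : ℝ[X])) hinj hdeg
  have hcoeff := congrArg (fun p => Polynomial.coeff p m) heq
  simp only [Lagrange.interpolate_apply, Polynomial.finset_sum_coeff] at hcoeff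
  rw [Polynomial.coeff_X_pow] at hcoeff
  rw [if_neg (by omega)] at hcoeff
  -- compute coeff m of each term
  have hterm : ∀ r ∈ Finset.range (m + 1),
      (C ((X:ℝ[X]) ^ k |>.eval (t r)) * Lagrange.basis (Finset.range (m+1)) t r).coeff m
      = (∏ s ∈ (Finset.range (m + 1)).erase r, (t r - t s)⁻¹) * t r ^ k := by
    intro r hr
    rw [Polynomial.coeff_C_mul]
    have hbasis : Lagrange.basis (Finset.range (m+1)) t r
        = C (∏ s ∈ (Finset.range (m + 1)).erase r, (t r - t s)⁻¹)
          * ∏ s ∈ (Finset.range (m + 1)).erase r, (X - C (t s)) := by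
      unfold Lagrange.basis Lagrange.basisDivisor
      rw [Finset.prod_mul_distrib, map_prod]
    rw [hbasis, Polynomial.coeff_C_mul]
    have hmonic : (∏ s ∈ (Finset.range (m + 1)).erase r, (X - C (t s)) : ℝ[X]).Monic :=
      monic_prod_of_monic _ _ (fun s _ => monic_X_sub_C (t s))
    have hnd : (∏ s ∈ (Finset.range (m + 1)).erase r, (X - C (t s)) : ℝ[X]).natDegree = m := by
      rw [Polynomial.natDegree_prod _ _ (fun s _ => X_sub_C_ne_zero (t s))]
      simp only [Polynomial.natDegree_X_sub_C]
      rw [Finset.sum_const, Finset.card_erase_of_mem hr, Finset.card_range]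
      simp
    have := hmonic.coeff_natDegree
    rw [hnd] at this
    rw [this, Polynomial.eval_pow, Polynomial.eval_X]
    ring
  rw [Finset.sum_congr rfl hterm] at hcoeff
  exact hcoeff.symm

lemma sign_Pm (m : ℕ) (y : ℕ → ℝ) (t : ℝ) (h : ∀ k, 1 ≤ k → k ≤ m → t ≠ y k) :
    Pm m y t ≠ 0 ∧ (0 < Pm m y t ↔ Even (((Finset.Icc 1 m).filter (fun k => t < y k)).card)) := by
  have hne : ∀ k ∈ Finset.Icc 1 m, t - y k ≠ 0 := by
    intro k hk
    rw [Finset.mem_Icc] at hk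
    exact sub_ne_zero.2 (h k hk.1 hk.2)
  constructor
  · exact aux_prod_ne_zero _ _ hne
  · rw [Pm, aux_prod_pos_iff _ _ hne]
    simp only [sub_neg]

lemma aux_imono (i : ℕ → ℕ) (m : ℕ) (hstep : ∀ r, r ≤ m → i r < i (r + 1)) :
    ∀ a b, a < b → b ≤ m + 1 → i a < i b := by
  intro a b hab hbm
  induction b with
  | zero => omega
  | succ b ih =>
    rcases Nat.lt_or_ge a b with h | h
    · exact lt_trans (ih h (by omega)) (hstep b (by omega))
    · have : a = b := by omega
      subst this; exact hstep a (by omega)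

lemma aux_imono' (i : ℕ → ℕ) (m : ℕ) (hstep : ∀ r, r ≤ m → i r < i (r + 1)) :
    ∀ a b, a ≤ b → b ≤ m + 1 → i a ≤ i b := by
  intro a b hab hbm
  rcases Nat.eq_or_lt_of_le hab with h | h
  · subst h; rfl
  · exact le_of_lt (aux_imono i m hstep a b h hbm)

lemma aux_sum_neg {ι : Type*} (s : Finset ι) (f : ι → ℝ) (h : ∀ i ∈ s, f i ≤ 0)
    (j : ι) (hj : j ∈ s) (hjlt : f j < 0) : ∑ i ∈ s, f i < 0 := by
  have h1 : 0 < ∑ i ∈ s, -f i :=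
    Finset.sum_pos' (fun i hi => neg_nonneg.2 (h i hi)) ⟨j, hj, neg_pos.2 hjlt⟩
  rw [Finset.sum_neg_distrib] at h1
  linarith

lemma aux_tele {G : Type*} [AddCommGroup G] (f : ℕ → G) (a b : ℕ) (h : a ≤ b) :
    ∑ l ∈ Finset.Ico a b, (f l - f (l + 1)) = f a - f b := by
  induction b, h using Nat.le_induction with
  | base => simp
  | succ b hab ih =>
    rw [Finset.sum_Ico_succ_top hab, ih]
    abel

lemma aux_integral_eq_sum (n : ℕ) (x : ℕ → ℝ) (ω : ℕ → ℝ)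
    (hω : ∀ j ∈ Finset.Icc 1 n, 0 ≤ ω j) (f : ℝ → ℝ) (hf : Continuous f) :
    ∫ t, f t ∂(∑ j ∈ Finset.Icc 1 n, ENNReal.ofReal (ω j) • Measure.dirac (x j))
      = ∑ j ∈ Finset.Icc 1 n, ω j * f (x j) := by
  have hint : ∀ j ∈ Finset.Icc 1 n,
      Integrable f (ENNReal.ofReal (ω j) • Measure.dirac (x j)) := by
    intro j _
    exact ((integrable_const (f (x j))).congr (ae_eq_dirac f).symm).smul_measure
      ENNReal.ofReal_ne_top
  rw [integral_finset_sum_measure hint]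
  refine Finset.sum_congr rfl fun j hj => ?_
  rw [integral_smul_measure, integral_dirac, ENNReal.toReal_ofReal (hω j hj), smul_eq_mul]

lemma Pm_continuous (m : ℕ) (y : ℕ → ℝ) : Continuous (Pm m y) := by
  unfold Pm
  exact continuous_finset_prod _ (fun k _ => continuous_id.sub continuous_const)

lemma dirA (m n : ℕ) (hm : 1 ≤ m) (hmn : m < n)
    (x y : ℕ → ℝ)
    (hx : ∀ j j', 1 ≤ j → j < j' → j' ≤ n → x j < x j')
    (hy : ∀ k k', 1 ≤ k → k < k' → k' ≤ m → y k < y k')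
    (hxy : ∀ j k, 1 ≤ j → j ≤ n → 1 ≤ k → k ≤ m → x j ≠ y k)
    (ω : ℕ → ℝ) (hω : ∀ j, 1 ≤ j → j ≤ n → 0 < ω j)
    (hsum : ∀ k, k < m → ∑ j ∈ Finset.Icc 1 n, (ω j * Pm m y (x j)) * x j ^ k = 0) :
    StrictlyInterlacesR n m x y := by
  classical
  have hxmono : ∀ a b, 1 ≤ a → a ≤ b → b ≤ n → x a ≤ x b := by
    intro a b h1 h2 h3
    rcases Nat.eq_or_lt_of_le h2 with h | h
    · subst h; rfl
    · exact le_of_lt (hx a b h1 h h3)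
  set a : ℕ → ℝ := fun j => ω j * Pm m y (x j) with ha_def
  set N : ℕ → ℕ := fun j => ((Finset.Icc 1 m).filter (fun k => x j < y k)).card with hN_def
  have hNanti : ∀ j j', 1 ≤ j → j ≤ j' → j' ≤ n → N j' ≤ N j := by
    intro j j' h1 h2 h3
    apply Finset.card_le_card
    intro k hk
    rw [Finset.mem_filter] at hk ⊢
    exact ⟨hk.1, lt_of_le_of_lt (hxmono j j' h1 h2 h3) hk.2⟩
  have hNm : ∀ j, N j ≤ m := by
    intro j
    calc N j ≤ (Finset.Icc 1 m).card := Finset.card_le_card (Finset.filter_subset _ _)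
      _ = m := by simp
  -- polynomial orthogonality
  have hpoly : ∀ p : ℝ[X], p.natDegree < m →
      ∑ j ∈ Finset.Icc 1 n, a j * p.eval (x j) = 0 := by
    intro p hp
    have : ∀ j ∈ Finset.Icc 1 n, a j * p.eval (x j)
        = ∑ k ∈ Finset.range m, p.coeff k * (a j * x j ^ k) := by
      intro j _
      rw [Polynomial.eval_eq_sum_range' hp, Finset.mul_sum]
      apply Finset.sum_congr rfl
      intro k _; ring
    rw [Finset.sum_congr rfl this, Finset.sum_comm]
    apply Finset.sum_eq_zero
    intro k hk
    rw [Finset.mem_range] at hk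
    rw [← Finset.mul_sum, hsum k hk, mul_zero]
  -- the parity-change set
  set D : Finset ℕ := (Finset.Ico 1 n).filter
      (fun l => ((N l : ZMod 2) ≠ (N (l+1) : ZMod 2))) with hD_def
  have hzmod : ∀ u v : ZMod 2, u ≠ v → u - v = 1 := by decide
  have htele : ∀ j, 1 ≤ j → j ≤ n →
      ((N j : ZMod 2)) - ((N n : ZMod 2)) = (((D.filter (fun l => j ≤ l)).card : ℕ) : ZMod 2) := by
    intro j h1 h2
    have h3 := aux_tele (fun l => ((N l : ZMod 2))) j n h2
    have h4 : ∀ l ∈ Finset.Ico j n,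
        ((N l : ZMod 2)) - ((N (l+1) : ZMod 2)) = (if l ∈ D then (1 : ZMod 2) else 0) := by
      intro l hl
      rw [Finset.mem_Ico] at hl
      by_cases hmem : l ∈ D
      · rw [if_pos hmem]
        rw [hD_def, Finset.mem_filter] at hmem
        exact hzmod _ _ hmem.2
      · rw [if_neg hmem]
        have : ((N l : ZMod 2)) = ((N (l+1) : ZMod 2)) := by
          by_contra hne
          exact hmem (by rw [hD_def, Finset.mem_filter, Finset.mem_Ico]; exact ⟨⟨by omega, hl.2⟩, hne⟩)
        rw [this, sub_self]
    rw [← h3, Finset.sum_congr rfl h4, Finset.sum_boole]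
    have hDsub : D ⊆ Finset.Ico 1 n := by rw [hD_def]; exact Finset.filter_subset _ _
    have hset : (Finset.Ico j n).filter (fun l => l ∈ D) = D.filter (fun l => j ≤ l) := by
      ext l
      simp only [Finset.mem_filter, Finset.mem_Ico]
      constructor
      · rintro ⟨⟨h5, h6⟩, h7⟩; exact ⟨h7, h5⟩
      · rintro ⟨h7, h5⟩
        have h8 := Finset.mem_Ico.1 (hDsub h7)
        exact ⟨⟨h5, h8.2⟩, h7⟩
    congr 1
    exact congrArg Finset.card hset
  have hDsub : D ⊆ Finset.Ico 1 n := by rw [hD_def]; exact Finset.filter_subset _ _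
  have heven : ∀ k : ℕ, ((k : ZMod 2) = 0) ↔ Even k := by
    intro k
    rw [ZMod.natCast_eq_zero_iff]
    exact even_iff_two_dvd.symm
  have hzval : ∀ u : ZMod 2, u = 0 ∨ u = 1 := by decide
  set M : ℕ → ℕ := fun j => (D.filter (fun l => j ≤ l)).card with hM_def
  -- Step A : m ≤ D.card
  have hDcard : m ≤ D.card := by
    by_contra hcon
    push_neg at hcon
    set z : ℕ → ℝ := fun l => (x l + x (l+1)) / 2 with hz_def
    have hzl : ∀ l ∈ D, x l < z l ∧ z l < x (l+1) := by
      intro l hl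
      have hl' := Finset.mem_Ico.1 (hDsub hl)
      have := hx l (l+1) hl'.1 (by omega) (by omega)
      constructor
      · simp only [hz_def]; linarith
      · simp only [hz_def]; linarith
    set q : ℝ[X] := ∏ l ∈ D, (X - C (z l)) with hq_def
    have hqdeg : q.natDegree < m := by
      rw [hq_def, Polynomial.natDegree_prod _ _ (fun l _ => Polynomial.X_sub_C_ne_zero (z l))]
      simp only [Polynomial.natDegree_X_sub_C]
      rw [Finset.sum_const, smul_eq_mul, mul_one]
      exact hcon
    have h0 := hpoly q hqdeg
    have hqeval : ∀ j, q.eval (x j) = ∏ l ∈ D, (x j - z l) := by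
      intro j
      rw [hq_def, Polynomial.eval_prod]
      apply Finset.prod_congr rfl
      intro l _
      simp
    have hxz : ∀ j, 1 ≤ j → j ≤ n → ∀ l ∈ D, (j ≤ l → x j < z l) ∧ (l < j → z l < x j) := by
      intro j h1 h2 l hl
      have hl' := Finset.mem_Ico.1 (hDsub hl)
      obtain ⟨hz1, hz2⟩ := hzl l hl
      constructor
      · intro hjl
        exact lt_of_le_of_lt (hxmono j l h1 hjl (by omega)) hz1
      · intro hlj
        exact lt_of_lt_of_le hz2 (hxmono (l+1) j (by omega) (by omega) h2)
    have hqsign : ∀ j, 1 ≤ j → j ≤ n →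
        q.eval (x j) ≠ 0 ∧ (0 < q.eval (x j) ↔ Even (M j)) := by
      intro j h1 h2
      have hne : ∀ l ∈ D, x j - z l ≠ 0 := by
        intro l hl
        obtain ⟨hA, hB⟩ := hxz j h1 h2 l hl
        rcases Nat.lt_or_ge l j with h | h
        · have := hB h; intro hc; nlinarith [hB h]
        · have := hA h; intro hc; nlinarith [hA h]
      constructor
      · rw [hqeval]; exact Finset.prod_ne_zero_iff.2 hne
      · rw [hqeval, aux_prod_pos_iff _ _ hne]
        have : D.filter (fun l => x j - z l < 0) = D.filter (fun l => j ≤ l) := by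
          ext l
          simp only [Finset.mem_filter, sub_neg]
          constructor
          · rintro ⟨hl, hlt⟩
            refine ⟨hl, ?_⟩
            by_contra hc
            push_neg at hc
            have := (hxz j h1 h2 l hl).2 hc
            linarith
          · rintro ⟨hl, hle⟩
            exact ⟨hl, (hxz j h1 h2 l hl).1 hle⟩
        rw [this, hM_def]
    -- signs of the terms
    have hterm : ∀ j, 1 ≤ j → j ≤ n →
        (Even (N n) → 0 < a j * q.eval (x j)) ∧ (¬ Even (N n) → a j * q.eval (x j) < 0) := by
      intro j h1 h2
      obtain ⟨hP0, hPs⟩ := sign_Pm m y (x j) (fun k hk1 hk2 => hxy j k h1 h2 hk1 hk2)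
      obtain ⟨hq0, hqs⟩ := hqsign j h1 h2
      have hωj := hω j h1 h2
      have hrel : ((N j : ZMod 2)) = ((N n : ZMod 2)) + ((M j : ZMod 2)) := by
        have := htele j h1 h2
        rw [hM_def]
        linear_combination this
      constructor
      · intro hev
        have hNn0 : ((N n : ZMod 2)) = 0 := (heven _).2 hev
        rw [hNn0, zero_add] at hrel
        have hpar : Even (N j) ↔ Even (M j) := by
          rw [← heven, ← heven, hrel]
        show 0 < ω j * Pm m y (x j) * q.eval (x j)
        by_cases hevj : Even (N j)
        · have hP := hPs.2 hevj
          have hq := hqs.2 (hpar.1 hevj)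
          exact mul_pos (mul_pos hωj hP) hq
        · have hP : Pm m y (x j) < 0 := by
            rcases hP0.lt_or_gt with h | h
            · exact h
            · exact absurd (hPs.1 h) hevj
          have hq : q.eval (x j) < 0 := by
            rcases hq0.lt_or_gt with h | h
            · exact h
            · exact absurd (hqs.1 h) (fun hc => hevj (hpar.2 hc))
          have h5 : 0 < Pm m y (x j) * q.eval (x j) := mul_pos_of_neg_of_neg hP hq
          rw [mul_assoc]
          exact mul_pos hωj h5
      · intro hodd
        have hNn1 : ((N n : ZMod 2)) = 1 := by
          rcases hzval ((N n : ZMod 2)) with h | h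
          · exact absurd ((heven _).1 h) hodd
          · exact h
        rw [hNn1] at hrel
        have hpar : Even (N j) ↔ ¬ Even (M j) := by
          constructor
          · intro hE hEM
            have hh1 : ((N j : ZMod 2)) = 0 := (heven _).2 hE
            have hh2 : ((M j : ZMod 2)) = 0 := (heven _).2 hEM
            rw [hh1, hh2] at hrel
            exact absurd hrel (by decide)
          · intro hn
            have hh2 : ((M j : ZMod 2)) = 1 := by
              rcases hzval ((M j : ZMod 2)) with h | h
              · exact absurd ((heven _).1 h) hn
              · exact h
            apply (heven _).1
            rw [hrel, hh2]
            decide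
        show ω j * Pm m y (x j) * q.eval (x j) < 0
        by_cases hevj : Even (N j)
        · have hP := hPs.2 hevj
          have hq : q.eval (x j) < 0 := by
            rcases hq0.lt_or_gt with h | h
            · exact h
            · exact absurd (hqs.1 h) (hpar.1 hevj)
          exact mul_neg_of_pos_of_neg (mul_pos hωj hP) hq
        · have hP : Pm m y (x j) < 0 := by
            rcases hP0.lt_or_gt with h | h
            · exact h
            · exact absurd (hPs.1 h) hevj
          have hq : 0 < q.eval (x j) := by
            apply hqs.2
            by_contra hc
            exact hevj (hpar.2 hc)
          exact mul_neg_of_neg_of_pos (mul_neg_of_pos_of_neg hωj hP) hq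
    have hne : (Finset.Icc 1 n).Nonempty := ⟨1, Finset.mem_Icc.mpr ⟨le_rfl, by omega⟩⟩
    by_cases hev : Even (N n)
    · have : 0 < ∑ j ∈ Finset.Icc 1 n, a j * q.eval (x j) := by
        apply Finset.sum_pos _ hne
        intro j hj; rw [Finset.mem_Icc] at hj
        exact (hterm j hj.1 hj.2).1 hev
      linarith [h0]
    · have : ∑ j ∈ Finset.Icc 1 n, a j * q.eval (x j) < 0 := by
        apply aux_sum_neg _ _ ?_ 1 (Finset.mem_Icc.mpr ⟨le_rfl, by omega⟩)
          ((hterm 1 le_rfl (by omega)).2 hev)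
        intro j hj; rw [Finset.mem_Icc] at hj
        exact le_of_lt ((hterm j hj.1 hj.2).2 hev)
      linarith [h0]
  -- Step B : counting
  have htelZ : ∑ l ∈ Finset.Ico 1 n, ((N l : ℤ) - (N (l+1) : ℤ)) = (N 1 : ℤ) - (N n : ℤ) :=
    aux_tele (fun l => (N l : ℤ)) 1 n (by omega)
  have hindle : ∀ l ∈ Finset.Ico 1 n, (if l ∈ D then (1:ℤ) else 0) ≤ (N l : ℤ) - (N (l+1) : ℤ) := by
    intro l hl
    rw [Finset.mem_Ico] at hl
    have hmono : N (l+1) ≤ N l := hNanti l (l+1) hl.1 (by omega) (by omega)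
    by_cases hmem : l ∈ D
    · rw [if_pos hmem]
      have : N l ≠ N (l+1) := by
        intro hc
        rw [hD_def, Finset.mem_filter] at hmem
        exact hmem.2 (by rw [hc])
      omega
    · rw [if_neg hmem]; omega
  have hindsum : ∑ l ∈ Finset.Ico 1 n, (if l ∈ D then (1:ℤ) else 0) = (D.card : ℤ) := by
    rw [Finset.sum_boole]
    congr 1
    apply congrArg Finset.card
    ext l
    simp only [Finset.mem_filter]
    exact ⟨fun h => h.2, fun h => ⟨hDsub h, h⟩⟩
  have hchain : (D.card : ℤ) ≤ (N 1 : ℤ) - (N n : ℤ) := by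
    rw [← hindsum, ← htelZ]
    exact Finset.sum_le_sum hindle
  have hN1m : N 1 = m ∧ N n = 0 := by
    have := hNm 1
    omega
  have hptwise : ∀ l ∈ Finset.Ico 1 n, (N l : ℤ) - (N (l+1) : ℤ) = (if l ∈ D then (1:ℤ) else 0) := by
    have hsum_eq : ∑ l ∈ Finset.Ico 1 n, (if l ∈ D then (1:ℤ) else 0)
        = ∑ l ∈ Finset.Ico 1 n, ((N l : ℤ) - (N (l+1) : ℤ)) := by
      rw [hindsum, htelZ]
      omega
    intro l hl
    exact ((Finset.sum_eq_sum_iff_of_le hindle).1 hsum_eq l hl).symm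
  have hdrop1 : ∀ l, 1 ≤ l → l < n → N l ≤ N (l+1) + 1 := by
    intro l h1 h2
    have := hptwise l (Finset.mem_Ico.mpr ⟨h1, h2⟩)
    by_cases hmem : l ∈ D
    · rw [if_pos hmem] at this; omega
    · rw [if_neg hmem] at this; omega
  -- Step C : intermediate values
  have hival : ∀ v, v ≤ m → ∃ j, 1 ≤ j ∧ j ≤ n ∧ N j = v := by
    intro v hv
    set T := (Finset.Icc 1 n).filter (fun j => v ≤ N j) with hT_def
    have hTne : T.Nonempty := by
      refine ⟨1, ?_⟩
      rw [hT_def, Finset.mem_filter, Finset.mem_Icc]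
      exact ⟨⟨le_rfl, by omega⟩, by omega⟩
    obtain ⟨hMxIcc, hMx3⟩ := Finset.mem_filter.1 (T.max'_mem hTne)
    obtain ⟨hMx1, hMx2⟩ := Finset.mem_Icc.1 hMxIcc
    set Mx := T.max' hTne with hMx_def
    by_cases hMxn : Mx = n
    · rw [hMxn] at hMx3
      exact ⟨n, by omega, le_rfl, by omega⟩
    · have hnm : ¬ (Mx + 1 ∈ T) := by
        intro hc
        have := T.le_max' (Mx + 1) hc
        omega
      have hNlt : N (Mx + 1) < v := by
        by_contra hc
        push_neg at hc
        exact hnm (Finset.mem_filter.2 ⟨Finset.mem_Icc.2 ⟨by omega, by omega⟩, hc⟩)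
      have := hdrop1 Mx hMx1 (by omega)
      exact ⟨Mx, hMx1, hMx2, by omega⟩
  -- define the interlacing indices
  set I : ℕ → ℕ := fun k => ((Finset.Icc 1 n).filter (fun j => m + 1 - k ≤ N j)).card with hI_def
  have hIdown : ∀ k, (Finset.Icc 1 n).filter (fun j => m + 1 - k ≤ N j) = Finset.Icc 1 (I k) := by
    intro k
    apply aux_downward _ (Finset.filter_subset _ _)
    intro j hj j' h1' h2'
    rw [Finset.mem_filter, Finset.mem_Icc] at hj ⊢
    refine ⟨⟨h1', by omega⟩, ?_⟩
    exact le_trans hj.2 (hNanti j' j h1' h2' hj.1.2)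
  have hI0 : I 0 = 0 := by
    show ((Finset.Icc 1 n).filter (fun j => m + 1 - 0 ≤ N j)).card = 0
    rw [Finset.filter_false_of_mem, Finset.card_empty]
    intro j _
    have := hNm j
    omega
  have hIm : I (m+1) = n := by
    show ((Finset.Icc 1 n).filter (fun j => m + 1 - (m+1) ≤ N j)).card = n
    rw [Finset.filter_true_of_mem, Nat.card_Icc]
    · omega
    · intro j _; omega
  have hIstep : ∀ r, r ≤ m → I r < I (r + 1) := by
    intro r hr
    obtain ⟨j, hj1, hj2, hjv⟩ := hival (m - r) (by omega)
    apply Finset.card_lt_card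
    rw [Finset.ssubset_iff_of_subset]
    · refine ⟨j, ?_, ?_⟩
      · rw [Finset.mem_filter, Finset.mem_Icc]
        exact ⟨⟨hj1, hj2⟩, by omega⟩
      · rw [Finset.mem_filter]
        rintro ⟨-, hc⟩
        omega
    · intro j' hj'
      rw [Finset.mem_filter] at hj' ⊢
      exact ⟨hj'.1, by omega⟩
  have hImono := aux_imono I m hIstep
  refine ⟨I, hI0, hIm, hIstep, ?_⟩
  intro k hk1 hk2
  have hIk1 : 1 ≤ I k := by
    have := hImono 0 k (by omega) (by omega)
    omega
  have hIkn : I k < n := by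
    have := hImono k (m+1) (by omega) le_rfl
    omega
  have hIkmem : I k ∈ (Finset.Icc 1 n).filter (fun j => m + 1 - k ≤ N j) := by
    rw [hIdown k, Finset.mem_Icc]
    exact ⟨hIk1, le_rfl⟩
  rw [Finset.mem_filter, Finset.mem_Icc] at hIkmem
  obtain ⟨⟨hIa, hIb⟩, hIN⟩ := hIkmem
  have hIk1N : N (I k + 1) < m + 1 - k := by
    have hnotmem : I k + 1 ∉ (Finset.Icc 1 n).filter (fun j => m + 1 - k ≤ N j) := by
      rw [hIdown k, Finset.mem_Icc]
      omega
    by_contra hc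
    push_neg at hc
    exact hnotmem (by rw [Finset.mem_filter, Finset.mem_Icc]; exact ⟨⟨by omega, by omega⟩, hc⟩)
  constructor
  · by_contra hcon
    push_neg at hcon
    have hne := hxy (I k) k hIa hIb hk1 hk2
    have hlt : y k < x (I k) := by
      rcases lt_or_eq_of_le hcon with h | h
      · exact h
      · exact absurd h.symm hne
    have hsub : (Finset.Icc 1 m).filter (fun k' => x (I k) < y k') ⊆ Finset.Icc (k+1) m := by
      intro k' hk'
      rw [Finset.mem_filter, Finset.mem_Icc] at hk'
      rw [Finset.mem_Icc]
      obtain ⟨⟨ha1, ha2⟩, ha3⟩ := hk'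
      refine ⟨?_, ha2⟩
      by_contra hc
      push_neg at hc
      have : y k' ≤ y k := by
        rcases Nat.eq_or_lt_of_le (by omega : k' ≤ k) with h | h
        · subst h; rfl
        · exact le_of_lt (hy k' k ha1 h hk2)
      linarith
    have : N (I k) ≤ m - k := by
      calc N (I k) ≤ (Finset.Icc (k+1) m).card := Finset.card_le_card hsub
        _ = m - k := by rw [Nat.card_Icc]; omega
    omega
  · by_contra hcon
    push_neg at hcon
    have hne := hxy (I k + 1) k (by omega) (by omega) hk1 hk2
    have hlt : x (I k + 1) < y k := by
      rcases lt_or_eq_of_le hcon with h | h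
      · exact h
      · exact absurd h hne
    have hsub : Finset.Icc k m ⊆ (Finset.Icc 1 m).filter (fun k' => x (I k + 1) < y k') := by
      intro k' hk'
      rw [Finset.mem_Icc] at hk'
      rw [Finset.mem_filter, Finset.mem_Icc]
      refine ⟨⟨by omega, hk'.2⟩, ?_⟩
      have : y k ≤ y k' := by
        rcases Nat.eq_or_lt_of_le hk'.1 with h | h
        · subst h; rfl
        · exact le_of_lt (hy k k' hk1 h hk'.2)
      linarith
    have : m - k + 1 ≤ N (I k + 1) := by
      calc m - k + 1 = (Finset.Icc k m).card := by rw [Nat.card_Icc]; omega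
        _ ≤ N (I k + 1) := Finset.card_le_card hsub
    omega

lemma dirB (m n : ℕ) (hm : 1 ≤ m) (hmn : m < n)
    (x y : ℕ → ℝ)
    (hx : ∀ j j', 1 ≤ j → j < j' → j' ≤ n → x j < x j')
    (hy : ∀ k k', 1 ≤ k → k < k' → k' ≤ m → y k < y k')
    (hxy : ∀ j k, 1 ≤ j → j ≤ n → 1 ≤ k → k ≤ m → x j ≠ y k)
    (hI : StrictlyInterlacesR n m x y) :
    ∃ ω : ℕ → ℝ, (∀ j, 1 ≤ j → j ≤ n → 0 < ω j) ∧
      ∀ k, k < m → ∑ j ∈ Finset.Icc 1 n, (ω j * Pm m y (x j)) * x j ^ k = 0 := by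
  classical
  obtain ⟨i, hi0, him, histep, hixy⟩ := hI
  have hxmono : ∀ a b, 1 ≤ a → a ≤ b → b ≤ n → x a ≤ x b := by
    intro a b h1 h2 h3
    rcases Nat.eq_or_lt_of_le h2 with h | h
    · subst h; rfl
    · exact le_of_lt (hx a b h1 h h3)
  have hile : ∀ r, r ≤ m + 1 → i r ≤ n := by
    intro r hr
    have := aux_imono' i m histep r (m+1) hr le_rfl
    omega
  -- the segment index of j
  set rj : ℕ → ℕ := fun j => ((Finset.Icc 1 m).filter (fun k => i k < j)).card with hrj_def
  have hrj : ∀ j, 1 ≤ j → j ≤ n → rj j ≤ m ∧ i (rj j) < j ∧ j ≤ i (rj j + 1) := by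
    intro j h1 h2
    set S := (Finset.Icc 1 m).filter (fun k => i k < j) with hS
    have hsub : S ⊆ Finset.Icc 1 m := Finset.filter_subset _ _
    have hdc : ∀ k ∈ S, ∀ k', 1 ≤ k' → k' ≤ k → k' ∈ S := by
      intro k hk k' h1' h2'
      rw [hS, Finset.mem_filter, Finset.mem_Icc] at hk ⊢
      refine ⟨⟨h1', le_trans h2' hk.1.2⟩, ?_⟩
      exact lt_of_le_of_lt (aux_imono' i m histep k' k h2' (by omega)) hk.2
    have hSeq : S = Finset.Icc 1 S.card := aux_downward S hsub hdc
    have hcard : S.card ≤ m := le_trans (Finset.card_le_card hsub) (by simp)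
    have hrjS : rj j = S.card := rfl
    refine ⟨hcard, ?_, ?_⟩
    · rcases Nat.eq_zero_or_pos (rj j) with h0 | h0
      · rw [h0, hi0]; omega
      · have : rj j ∈ S := by
          rw [hSeq]; rw [Finset.mem_Icc]; omega
        rw [hS, Finset.mem_filter] at this; exact this.2
    · rcases Nat.eq_or_lt_of_le hcard with h | h
      · have : rj j + 1 = m + 1 := by omega
        rw [this, him]; exact h2
      · by_contra hcon
        push_neg at hcon
        have : rj j + 1 ∈ S := by
          rw [hS, Finset.mem_filter, Finset.mem_Icc]
          exact ⟨⟨by omega, by omega⟩, hcon⟩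
        rw [hSeq, Finset.mem_Icc] at this
        omega
  -- node selection
  set e : ℕ → ℕ → ℕ := fun j r => if r = rj j then j else i r + 1 with he_def
  have heseg : ∀ j, 1 ≤ j → j ≤ n → ∀ r, r ≤ m → i r < e j r ∧ e j r ≤ i (r + 1) := by
    intro j h1 h2 r hr
    obtain ⟨hr1, hr2, hr3⟩ := hrj j h1 h2
    by_cases h : r = rj j
    · subst h; simp only [he_def, if_pos rfl]; exact ⟨hr2, hr3⟩
    · simp only [he_def, if_neg h]
      exact ⟨Nat.lt_succ_self _, histep r hr⟩
  have hebd : ∀ j, 1 ≤ j → j ≤ n → ∀ r, r ≤ m → 1 ≤ e j r ∧ e j r ≤ n := by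
    intro j h1 h2 r hr
    obtain ⟨ha, hb⟩ := heseg j h1 h2 r hr
    exact ⟨by omega, le_trans hb (hile (r+1) (by omega))⟩
  have hestrict : ∀ j, 1 ≤ j → j ≤ n → ∀ r s, r < s → s ≤ m → x (e j r) < x (e j s) := by
    intro j h1 h2 r s hrs hsm
    obtain ⟨_, hb⟩ := heseg j h1 h2 r (by omega)
    obtain ⟨ha', _⟩ := heseg j h1 h2 s hsm
    have h3 : e j r ≤ i s := le_trans hb (aux_imono' i m histep (r+1) s hrs (by omega))
    have : e j r < e j s := by omega
    exact hx _ _ (hebd j h1 h2 r (by omega)).1 this (hebd j h1 h2 s hsm).2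
  -- N count at nodes
  have hsegN : ∀ j, 1 ≤ j → j ≤ n → ∀ r, r ≤ m →
      ((Finset.Icc 1 m).filter (fun k => x (e j r) < y k)) = Finset.Icc (r+1) m := by
    intro j h1 h2 r hr
    ext k
    simp only [Finset.mem_filter, Finset.mem_Icc]
    constructor
    · rintro ⟨⟨hk1, hk2⟩, hk3⟩
      refine ⟨?_, hk2⟩
      by_contra hcon
      push_neg at hcon
      have hkr : k ≤ r := by omega
      -- y k ≤ y r < x (i r + 1) ≤ x (e j r)
      have h4 : y k ≤ y r := by
        rcases Nat.eq_or_lt_of_le hkr with h | h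
        · subst h; rfl
        · exact le_of_lt (hy k r hk1 h (by omega))
      have hr1 : 1 ≤ r := by omega
      have h5 : y r < x (i r + 1) := (hixy r hr1 hr).2
      have h6 : x (i r + 1) ≤ x (e j r) := by
        apply hxmono _ _ (by omega) (heseg j h1 h2 r hr).1 (hebd j h1 h2 r hr).2
      linarith
    · rintro ⟨hk1, hk2⟩
      refine ⟨⟨by omega, hk2⟩, ?_⟩
      have hrm : r + 1 ≤ m := by omega
      have h4 : x (e j r) ≤ x (i (r+1)) := by
        apply hxmono _ _ (hebd j h1 h2 r hr).1 (heseg j h1 h2 r hr).2 (hile (r+1) (by omega))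
      have h5 : x (i (r+1)) < y (r+1) := (hixy (r+1) (by omega) hrm).1
      have h6 : y (r+1) ≤ y k := by
        rcases Nat.eq_or_lt_of_le hk1 with h | h
        · subst h; rfl
        · exact le_of_lt (hy (r+1) k (by omega) h hk2)
      linarith
  -- divided difference coefficients
  set c : ℕ → ℕ → ℝ := fun j r => ∏ s ∈ (Finset.range (m+1)).erase r, (x (e j r) - x (e j s))⁻¹
    with hc_def
  have hcsign : ∀ j, 1 ≤ j → j ≤ n → ∀ r, r ≤ m →
      c j r ≠ 0 ∧ (0 < c j r ↔ Even (m - r)) := by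
    intro j h1 h2 r hr
    have hne : ∀ s ∈ (Finset.range (m+1)).erase r, (x (e j r) - x (e j s))⁻¹ ≠ 0 := by
      intro s hs
      rw [Finset.mem_erase, Finset.mem_range] at hs
      apply inv_ne_zero; apply sub_ne_zero.2
      rcases Nat.lt_or_ge r s with h | h
      · exact ne_of_lt (hestrict j h1 h2 r s h (by omega))
      · have : s < r := by omega
        exact (ne_of_lt (hestrict j h1 h2 s r this hr)).symm
    constructor
    · exact Finset.prod_ne_zero_iff.2 hne
    · rw [hc_def]
      rw [aux_prod_pos_iff _ _ hne]
      have hfeq : ((Finset.range (m+1)).erase r).filter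
            (fun s => (x (e j r) - x (e j s))⁻¹ < 0) = Finset.Icc (r+1) m := by
        ext s
        simp only [Finset.mem_filter, Finset.mem_erase, Finset.mem_range, Finset.mem_Icc]
        constructor
        · rintro ⟨⟨hs1, hs2⟩, hs3⟩
          rw [inv_lt_zero, sub_neg] at hs3
          constructor
          · by_contra hcon
            push_neg at hcon
            have : s < r := by omega
            have := hestrict j h1 h2 s r this hr
            linarith
          · omega
        · rintro ⟨hs1, hs2⟩
          refine ⟨⟨by omega, by omega⟩, ?_⟩
          rw [inv_lt_zero, sub_neg]
          exact hestrict j h1 h2 r s (by omega) hs2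
      rw [hfeq, Nat.card_Icc]
      congr! 1
      omega
  -- the weight vector a
  set a : ℕ → ℝ := fun j => ∑ j' ∈ Finset.Icc 1 n, ∑ r ∈ Finset.range (m+1),
      (if e j' r = j then c j' r else 0) with ha_def
  -- orthogonality of a
  have hkey1 : ∀ k, k < m → ∑ j ∈ Finset.Icc 1 n, a j * x j ^ k = 0 := by
    intro k hk
    simp only [ha_def, Finset.sum_mul, ite_mul, zero_mul]
    rw [Finset.sum_comm]
    refine Finset.sum_eq_zero fun j' hj' => ?_
    rw [Finset.mem_Icc] at hj'
    rw [Finset.sum_comm]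
    have collapse : ∀ r ∈ Finset.range (m+1),
        (∑ j ∈ Finset.Icc 1 n, if e j' r = j then c j' r * x j ^ k else 0)
          = c j' r * x (e j' r) ^ k := by
      intro r hr
      rw [Finset.mem_range] at hr
      rw [Finset.sum_ite_eq (Finset.Icc 1 n) (e j' r) (fun j => c j' r * x j ^ k)]
      rw [if_pos (Finset.mem_Icc.mpr ⟨(hebd j' hj'.1 hj'.2 r (by omega)).1,
        (hebd j' hj'.1 hj'.2 r (by omega)).2⟩)]
    rw [Finset.sum_congr rfl collapse]
    exact aux_dd (fun r => x (e j' r)) (hestrict j' hj'.1 hj'.2) hk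
  -- sign of a
  have hkey2 : ∀ j, 1 ≤ j → j ≤ n →
      (Even (((Finset.Icc 1 m).filter (fun k => x j < y k)).card) → 0 < a j) ∧
      (¬ Even (((Finset.Icc 1 m).filter (fun k => x j < y k)).card) → a j < 0) := by
    intro j h1 h2
    set Nj := ((Finset.Icc 1 m).filter (fun k => x j < y k)).card with hNj
    -- each inner sum has weak sign, with strict at j' = j
    have hterm : ∀ j', 1 ≤ j' → j' ≤ n → ∀ r, r < m + 1 →
        (Even Nj → 0 ≤ (if e j' r = j then c j' r else 0)) ∧
        (¬ Even Nj → (if e j' r = j then c j' r else 0) ≤ 0) := by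
      intro j' h1' h2' r hr
      by_cases hej : e j' r = j
      · rw [if_pos hej]
        have hNr : Nj = m - r := by
          rw [hNj, ← hej, hsegN j' h1' h2' r (by omega), Nat.card_Icc]
          omega
        obtain ⟨hc0, hcs⟩ := hcsign j' h1' h2' r (by omega)
        constructor
        · intro hev; rw [hNr] at hev; exact le_of_lt (hcs.2 hev)
        · intro hodd; rw [hNr] at hodd
          rcases hc0.lt_or_gt with hlt | hgt
          · exact le_of_lt hlt
          · exact absurd (hcs.1 hgt) hodd
      · rw [if_neg hej]; exact ⟨fun _ => le_rfl, fun _ => le_rfl⟩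
    have hinner : ∀ j', 1 ≤ j' → j' ≤ n →
        (Even Nj → 0 ≤ ∑ r ∈ Finset.range (m+1), (if e j' r = j then c j' r else 0)) ∧
        (¬ Even Nj → (∑ r ∈ Finset.range (m+1), (if e j' r = j then c j' r else 0)) ≤ 0) := by
      intro j' h1' h2'
      constructor
      · intro hev
        apply Finset.sum_nonneg
        intro r hr; rw [Finset.mem_range] at hr
        exact (hterm j' h1' h2' r hr).1 hev
      · intro hodd
        apply Finset.sum_nonpos
        intro r hr; rw [Finset.mem_range] at hr
        exact (hterm j' h1' h2' r hr).2 hodd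
    -- strictness at j' = j : the term at r = rj j is exactly c j (rj j) ≠ 0
    have hrjm := (hrj j h1 h2).1
    have hejj : e j (rj j) = j := by simp only [he_def, if_pos rfl]
    obtain ⟨hc0, hcs⟩ := hcsign j h1 h2 (rj j) hrjm
    have hNrj : Nj = m - rj j := by
      have hseg := hsegN j h1 h2 (rj j) hrjm
      rw [hejj] at hseg
      rw [hNj, hseg, Nat.card_Icc]; omega
    have hdiag : ∀ r ∈ Finset.range (m+1), r ≠ rj j →
        (Even Nj → 0 ≤ (if e j r = j then c j r else 0)) ∧
        (¬ Even Nj → (if e j r = j then c j r else 0) ≤ 0) := by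
      intro r hr _; rw [Finset.mem_range] at hr; exact hterm j h1 h2 r hr
    have hrjmem : rj j ∈ Finset.range (m+1) := Finset.mem_range.mpr (by omega)
    constructor
    · intro hev
      have hstrict : 0 < ∑ r ∈ Finset.range (m+1), (if e j r = j then c j r else 0) := by
        apply Finset.sum_pos'
        · intro r hr; rw [Finset.mem_range] at hr; exact (hterm j h1 h2 r hr).1 hev
        · refine ⟨rj j, hrjmem, ?_⟩
          rw [if_pos hejj]
          apply hcs.2; rw [hNrj] at hev; exact hev
      have : 0 < a j := by
        rw [ha_def]
        apply Finset.sum_pos'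
        · intro j' hj'; rw [Finset.mem_Icc] at hj'
          exact (hinner j' hj'.1 hj'.2).1 hev
        · exact ⟨j, Finset.mem_Icc.mpr ⟨h1, h2⟩, hstrict⟩
      exact this
    · intro hodd
      have hstrict : (∑ r ∈ Finset.range (m+1), (if e j r = j then c j r else 0)) < 0 := by
        have hle : ∀ r ∈ Finset.range (m+1), (if e j r = j then c j r else 0) ≤ 0 := by
          intro r hr; rw [Finset.mem_range] at hr; exact (hterm j h1 h2 r hr).2 hodd
        have hlt : (if e j (rj j) = j then c j (rj j) else 0) < 0 := by
          rw [if_pos hejj]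
          rcases hc0.lt_or_gt with hlt | hgt
          · exact hlt
          · exact absurd (hcs.1 hgt) (by rw [hNrj] at hodd; exact hodd)
        exact aux_sum_neg _ _ hle (rj j) hrjmem hlt
      have : a j < 0 := by
        rw [ha_def]
        have hle : ∀ j' ∈ Finset.Icc 1 n,
            (∑ r ∈ Finset.range (m+1), (if e j' r = j then c j' r else 0)) ≤ 0 := by
          intro j' hj'; rw [Finset.mem_Icc] at hj'
          exact (hinner j' hj'.1 hj'.2).2 hodd
        exact aux_sum_neg _ _ hle j (Finset.mem_Icc.mpr ⟨h1, h2⟩) hstrict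
      exact this
  -- define the weights
  refine ⟨fun j => a j * (Pm m y (x j))⁻¹, ?_, ?_⟩
  · intro j h1 h2
    obtain ⟨hP0, hPs⟩ := sign_Pm m y (x j) (fun k hk1 hk2 => hxy j k h1 h2 hk1 hk2)
    obtain ⟨hA, hB⟩ := hkey2 j h1 h2
    by_cases hev : Even (((Finset.Icc 1 m).filter (fun k => x j < y k)).card)
    · exact mul_pos (hA hev) (inv_pos.mpr (hPs.mpr hev))
    · have hPneg : Pm m y (x j) < 0 := by
        rcases hP0.lt_or_gt with h | h
        · exact h
        · exact absurd (hPs.mp h) hev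
      exact mul_pos_of_neg_of_neg (hB hev) (inv_lt_zero.mpr hPneg)
  · intro k hk
    have : ∀ j ∈ Finset.Icc 1 n,
        (a j * (Pm m y (x j))⁻¹ * Pm m y (x j)) * x j ^ k = a j * x j ^ k := by
      intro j hj
      rw [Finset.mem_Icc] at hj
      obtain ⟨hP0, _⟩ := sign_Pm m y (x j) (fun k' hk1 hk2 => hxy j k' hj.1 hj.2 hk1 hk2)
      field_simp
    rw [Finset.sum_congr rfl this]
    exact hkey1 k hk

end StmtAux

/-- there exists a positive Borel measure `μ = ∑_{j=1}^n ω_j δ_{x_j}` on `ℝ`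
with all `ω_j > 0` such that `∫ P_m(t) t^k dμ(t) = 0` for every `k = 0,…,m-1`, if and only
if `{y_k}_{k=1}^m` strictly interlaces `{x_j}_{j=1}^n`. -/
theorem stmt_10 (m n : ℕ) (hm : 1 ≤ m) (hmn : m < n)
    (x y : ℕ → ℝ)
    (hx : ∀ j j', 1 ≤ j → j < j' → j' ≤ n → x j < x j')
    (hy : ∀ k k', 1 ≤ k → k < k' → k' ≤ m → y k < y k')
    (hxy : ∀ j k, 1 ≤ j → j ≤ n → 1 ≤ k → k ≤ m → x j ≠ y k) :
    (∃ ω : ℕ → ℝ, (∀ j, 1 ≤ j → j ≤ n → 0 < ω j) ∧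
      ∀ k, k < m →
        ∫ t, Pm m y t * t ^ k
          ∂(∑ j ∈ Finset.Icc 1 n, ENNReal.ofReal (ω j) • Measure.dirac (x j)) = 0)
    ↔ StrictlyInterlacesR n m x y := by

  constructor
  · rintro ⟨ω, hω, hint⟩
    apply dirA m n hm hmn x y hx hy hxy ω hω
    intro k hk
    have h0 := hint k hk
    rw [aux_integral_eq_sum n x ω
      (fun j hj => le_of_lt (hω j (Finset.mem_Icc.1 hj).1 (Finset.mem_Icc.1 hj).2))
      (fun t => Pm m y t * t ^ k) ((Pm_continuous m y).mul (continuous_pow k))] at h0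
    rw [← h0]
    apply Finset.sum_congr rfl
    intro j _
    ring
  · intro hI
    obtain ⟨ω, hω, hsum⟩ := dirB m n hm hmn x y hx hy hxy hI
    refine ⟨ω, hω, ?_⟩
    intro k hk
    rw [aux_integral_eq_sum n x ω
      (fun j hj => le_of_lt (hω j (Finset.mem_Icc.1 hj).1 (Finset.mem_Icc.1 hj).2))
      (fun t => Pm m y t * t ^ k) ((Pm_continuous m y).mul (continuous_pow k))]
    rw [← hsum k hk]
    apply Finset.sum_congr rfl
    intro j _
    ring
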